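/- Let 3 ≤ n < k+3, w = ⌈(k+1)/(n-2)⌉, ℓ > w, and |i - j| = w, say j = i + w. Then the duals of critical pairs (x^i_α, x^{i+w}_β) ∈ Crit(E_i) and (x^j_γ, x^{j+w}_δ) ∈ Crit(E_j) form a strict alternating cycle if and only if β = γ. -/

import Mathlib

/-- In the generalized crown `S^k_n` (indices in `ZMod (n+k)`), `b_i` is incomparable
with `a_u` iff `u ≡ i + t (mod n+k)` for some `0 ≤ t ≤ k`. -/
def crownMiss (k : ℕ) {N : ℕ} (i u : ZMod N) : Prop :=
  ∃ t : ℕ, t ≤ k ∧ u = i + (t : ZMod N)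

/-- One step of the layered generalized crown `⋊_ℓ S^k_n` on `ℕ × ZMod (n+k)`:
`x^{i+1}_j` covers `x^i_m` exactly when `m` is a "hit" of `j`. -/
def layStep (k : ℕ) {N : ℕ} (x y : ℕ × ZMod N) : Prop :=
  y.1 = x.1 + 1 ∧ ¬ crownMiss k y.2 x.2

/-- The order of the layered generalized crown: reflexive transitive closure. -/
def layLe (k : ℕ) {N : ℕ} : ℕ × ZMod N → ℕ × ZMod N → Prop :=
  Relation.ReflTransGen (layStep k)

/-- The strict order of the layered generalized crown: transitive closure. -/
def layLt (k : ℕ) {N : ℕ} : ℕ × ZMod N → ℕ × ZMod N → Prop :=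
  Relation.TransGen (layStep k)


/-- `{(x₁,y₁),(x₂,y₂)}` is a strict alternating cycle of length 2 for the order `le`. -/
def sac2 {α : Type*} (le : α → α → Prop) (x1 y1 x2 y2 : α) : Prop :=
  (¬ le x1 y1 ∧ ¬ le y1 x1) ∧ (¬ le x2 y2 ∧ ¬ le y2 x2) ∧
    le y1 x2 ∧ le y2 x1 ∧ ¬ le y1 x1 ∧ ¬ le y2 x2

lemma le_level {k N : ℕ} {x y : ℕ × ZMod N} (h : layLe k x y) : x = y ∨ x.1 < y.1 := by
  induction h with
  | refl => left; rfl
  | tail h1 h2 ih =>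
    have hc := h2.1
    rcases ih with e | lt
    · subst e; right; omega
    · right; omega

lemma step_aux (n k : ℕ) (hn : 3 ≤ n) (s : ℕ) (h1 : 1 ≤ s) (h2 : s ≤ n - 1)
    (i : ℕ) (a : ZMod (n + k)) : layStep k (i, a) (i + 1, a + (s : ZMod (n + k))) := by
  haveI : NeZero (n + k) := ⟨by omega⟩
  refine ⟨rfl, ?_⟩
  rintro ⟨t, ht, heq⟩
  simp only at heq
  have : ((s + t : ℕ) : ZMod (n + k)) = 0 := by
    push_cast
    linear_combination -heq
  rw [ZMod.natCast_eq_zero_iff] at this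
  have := Nat.le_of_dvd (by omega) this
  omega

lemma reach_aux (n k : ℕ) (hn : 3 ≤ n) :
    ∀ m S : ℕ, m ≤ S → S ≤ m * (n - 1) →
    ∀ (i : ℕ) (a : ZMod (n + k)), layLe k (i, a) (i + m, a + (S : ZMod (n + k))) := by
  intro m
  induction m with
  | zero =>
    intro S h1 h2 i a
    have : S = 0 := by omega
    subst this
    simp only [Nat.add_zero, Nat.cast_zero, add_zero]
    exact Relation.ReflTransGen.refl
  | succ m ih =>
    intro S h1 h2 i a
    have hmP : m ≤ m * (n - 1) := Nat.le_mul_of_pos_right m (by omega)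
    have h2' : S ≤ m * (n - 1) + (n - 1) := by rw [Nat.succ_mul] at h2; omega
    set s := max 1 (S - m * (n - 1)) with hs
    have hs1 : 1 ≤ s := le_max_left _ _
    have hsn : s ≤ n - 1 := by omega
    have hms : m ≤ S - s := by omega
    have hsS : S - s ≤ m * (n - 1) := by omega
    have hstep := step_aux n k hn s hs1 hsn i a
    have htail := ih (S - s) hms hsS (i + 1) (a + (s : ZMod (n + k)))
    have heq1 : i + 1 + m = i + (m + 1) := by omega
    have heq2 : a + (s : ZMod (n + k)) + ((S - s : ℕ) : ZMod (n + k)) = a + (S : ZMod (n + k)) := by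
      have : s ≤ S := by omega
      rw [Nat.cast_sub this]
      ring
    rw [heq1, heq2] at htail
    exact Relation.ReflTransGen.head hstep htail

lemma reach_all (n k : ℕ) (hn : 3 ≤ n) (m : ℕ) (hm : n + k - 1 ≤ m * (n - 2))
    (i : ℕ) (a b : ZMod (n + k)) : layLe k (i, a) (i + m, b) := by
  haveI : NeZero (n + k) := ⟨by omega⟩
  obtain ⟨N, hN⟩ : ∃ N, N = n + k := ⟨_, rfl⟩
  have hd : ∃ d, d = (b - a).val := ⟨_, rfl⟩
  obtain ⟨d, hd⟩ := hd
  have hdN : d < n + k := hd ▸ ZMod.val_lt _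
  have hmod : (d + m * (n + k - 1)) % (n + k) < n + k := Nat.mod_lt _ (by omega)
  obtain ⟨S, hS⟩ : ∃ S, S = m + (d + m * (n + k - 1)) % (n + k) := ⟨_, rfl⟩
  have h1 : m ≤ S := by omega
  have hsub : m * (n - 1) = m * (n - 2) + m := by
    rw [← Nat.mul_succ]; congr 1; omega
  have h2 : S ≤ m * (n - 1) := by omega
  have hmul : m * (n + k - 1) + m = m * (n + k) := by rw [← Nat.mul_succ]; congr 1; omega
  have hSmod : S % (n + k) = d := by
    have e1 : S % (n + k) = (m + (d + m * (n + k - 1))) % (n + k) := by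
      rw [hS, Nat.add_mod, Nat.mod_mod_of_dvd _ dvd_rfl, ← Nat.add_mod]
    have e2 : m + (d + m * (n + k - 1)) = d + m * (n + k) := by omega
    rw [e1, e2, Nat.add_mul_mod_self_right, Nat.mod_eq_of_lt hdN]
  have hcast : (S : ZMod (n + k)) = (d : ZMod (n + k)) := by
    rw [← ZMod.natCast_mod S (n + k), hSmod]
  have hr := reach_aux n k hn m S h1 h2 i a
  have hb : a + (S : ZMod (n + k)) = b := by
    rw [hcast, hd, ZMod.natCast_val, ZMod.cast_id]
    ring
  rwa [hb] at hr

/-- In `⋊_ℓ S^k_n` with `3 ≤ n < k+3`, `w = ⌈(k+1)/(n-2)⌉`, `ℓ > w` and `j = i + w`: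
the duals of critical pairs `(x^i_α, x^{i+w}_β) ∈ Crit(E_i)` and
`(x^j_γ, x^{j+w}_δ) ∈ Crit(E_j)` form a strict alternating cycle iff `β = γ`. -/
theorem layered_w_blocks (n k l w i j : ℕ) (hn : 3 ≤ n) (hk : n < k + 3)
    (hw : w = (k + n - 2) / (n - 2)) (hl : w < l) (hj : j = i + w)
    (hi : 1 ≤ i) (hjw : j + w ≤ l + 1)
    (α β γ δ : ZMod (n + k))
    (hcrit1 : ¬ layLe k (i, α) (i + w, β) ∧ ¬ layLe k (i + w, β) (i, α))
    (hcrit2 : ¬ layLe k (j, γ) (j + w, δ) ∧ ¬ layLe k (j + w, δ) (j, γ)) :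
    sac2 (layLe k) (i + w, β) (i, α) (j + w, δ) (j, γ) ↔ β = γ := by
  subst hj
  have key : k + 1 ≤ w * (n - 2) := by
    obtain ⟨v, rfl⟩ : ∃ v, n = v + 3 := ⟨n - 3, by omega⟩
    have hdm := Nat.div_add_mod (k + (v + 3) - 2) (v + 3 - 2)
    have hr : (k + (v + 3) - 2) % (v + 3 - 2) < v + 3 - 2 := Nat.mod_lt _ (by omega)
    rw [← hw] at hdm
    have e1 : v + 3 - 2 = v + 1 := by omega
    have e2 : k + (v + 3) - 2 = k + v + 1 := by omega
    simp only [e1, e2] at hdm hr ⊢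
    nlinarith [hdm, hr]
  constructor
  · rintro ⟨_, _, _, h4, _, _⟩
    rcases le_level h4 with e | lt
    · have := congrArg Prod.snd e
      exact this.symm
    · simp at lt
  · intro hbg
    subst hbg
    refine ⟨⟨hcrit1.2, hcrit1.1⟩, ⟨hcrit2.2, hcrit2.1⟩, ?_,
      Relation.ReflTransGen.refl, hcrit1.1, hcrit2.1⟩
    have hm : n + k - 1 ≤ (w + w) * (n - 2) := by
      have : (w + w) * (n - 2) = w * (n - 2) + w * (n - 2) := by ring
      omega
    have hr := reach_all n k hn (w + w) hm i α δ
    have : i + (w + w) = i + w + w := by omega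
    rwa [this] at hr
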